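/- Let K ≥ 0, c₁ > K/2, c₂ ≥ 0, and let F : ℝ → ℝ be twice differentiable with F''(s) ≥ −K and F(s) ≥ c₁ s² − c₂ for all s ∈ ℝ. Then there exist constants C₁ > 0 and C₂ ≥ 0 such that for all s ∈ ℝ: |F(s)| ≤ C₁ |F'(s)| (1 + |s|) + C₂. -/

import Mathlib

/-- under `F'' ≥ −K` (quadratic perturbation of a convex
function) and the coercivity `F(s) ≥ c₁ s² − c₂` with `c₁ > K/2`, there are
constants `C₁ > 0`, `C₂ ≥ 0` with `|F(s)| ≤ C₁ |F'(s)| (1 + |s|) + C₂`. -/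
theorem abs_F_le_abs_deriv_bound
    (F F' F'' : ℝ → ℝ) (K c₁ c₂ : ℝ)
    (hK : 0 ≤ K) (hc₁ : c₁ > K / 2) (hc₂ : 0 ≤ c₂)
    (hF' : ∀ s, HasDerivAt F (F' s) s)
    (hF'' : ∀ s, HasDerivAt F' (F'' s) s)
    (hlow : ∀ s, F'' s ≥ -K)
    (hF_low : ∀ s, F s ≥ c₁ * s ^ 2 - c₂) :
    ∃ C₁ C₂ : ℝ, 0 < C₁ ∧ 0 ≤ C₂ ∧
      ∀ s : ℝ, |F s| ≤ C₁ * |F' s| * (1 + |s|) + C₂ := by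
  -- Key Taylor-type inequality: F s ≤ F 0 + F' s * s + K/2 * s²
  have key : ∀ s : ℝ, F s ≤ F 0 + F' s * s + K / 2 * s ^ 2 := by
    intro s
    set p : ℝ → ℝ := fun t => F' t - F' s + K * (t - s) with hpdef
    have hp : ∀ t, HasDerivAt p (F'' t + K) t := by
      intro t
      have h1 : HasDerivAt (fun t : ℝ => F' t - F' s) (F'' t) t :=
        (hF'' t).sub_const _
      have h2 : HasDerivAt (fun t : ℝ => K * (t - s)) (K * 1) t :=
        ((hasDerivAt_id t).sub_const s).const_mul K
      exact (h1.add h2).congr_deriv (by ring)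
    set phi : ℝ → ℝ := fun t => F t - F' s * t + K / 2 * (t - s) ^ 2 with hphidef
    have hphi : ∀ t, HasDerivAt phi (p t) t := by
      intro t
      have h1 : HasDerivAt (fun t : ℝ => F t - F' s * t) (F' t - F' s * 1) t :=
        (hF' t).sub ((hasDerivAt_id t).const_mul (F' s))
      have h2 : HasDerivAt (fun t : ℝ => K / 2 * (t - s) ^ 2)
          (K / 2 * (2 * (t - s) ^ 1 * 1)) t :=
        (((hasDerivAt_id t).sub_const s).pow 2).const_mul (K / 2)
      have := h1.add h2
      exact this.congr_deriv (by simp only [p]; ring)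
    have pmono : Monotone p :=
      monotone_of_deriv_nonneg (fun t => (hp t).differentiableAt)
        (fun t => by rw [(hp t).deriv]; linarith [hlow t])
    have hps : p s = 0 := by simp [hpdef]
    have hdphi : ∀ t, deriv phi t = p t := fun t => (hphi t).deriv
    have hcont : Continuous phi :=
      continuous_iff_continuousAt.2 fun t => (hphi t).continuousAt
    have hdiffphi : Differentiable ℝ phi := fun t => (hphi t).differentiableAt
    have h0 : phi s ≤ phi 0 := by
      rcases le_total 0 s with h | h
      · have hanti : AntitoneOn phi (Set.Icc 0 s) := by
          apply antitoneOn_of_deriv_nonpos (convex_Icc 0 s) hcont.continuousOn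
            (hdiffphi.differentiableOn)
          intro x hx
          rw [hdphi]
          have hxs : x ≤ s := by
            rw [interior_Icc] at hx
            exact le_of_lt hx.2
          have := pmono hxs
          linarith [hps ▸ this]
        exact hanti ⟨le_refl 0, h⟩ ⟨h, le_refl s⟩ h
      · have hmono : MonotoneOn phi (Set.Icc s 0) := by
          apply monotoneOn_of_deriv_nonneg (convex_Icc s 0) hcont.continuousOn
            (hdiffphi.differentiableOn)
          intro x hx
          rw [hdphi]
          have hxs : s ≤ x := by
            rw [interior_Icc] at hx
            exact le_of_lt hx.1
          have := pmono hxs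
          linarith [hps ▸ this]
        exact hmono ⟨le_refl s, h⟩ ⟨h, le_refl 0⟩ h
    have e1 : phi s = F s - F' s * s := by simp [hphidef]
    have e2 : phi 0 = F 0 + K / 2 * s ^ 2 := by simp [hphidef]
    rw [e1, e2] at h0
    linarith
  -- constants
  have hc₁pos : 0 < c₁ := lt_of_le_of_lt (by linarith) hc₁
  set θ : ℝ := K / (2 * c₁) with hθdef
  have hθ0 : 0 ≤ θ := div_nonneg hK (by linarith)
  have hθ1 : θ < 1 := by
    rw [hθdef, div_lt_one (by linarith)]
    linarith
  set d : ℝ := 1 - θ with hddef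
  have hd : 0 < d := by simp [hddef]; linarith
  refine ⟨1 / d, (|F 0| + θ * c₂) / d + 2 * c₂, by positivity, by positivity, ?_⟩
  intro s
  have habsF' : 0 ≤ |F' s| := abs_nonneg _
  have h2 : c₁ * s ^ 2 ≤ F s + c₂ := by linarith [hF_low s]
  have hθc : θ * c₁ = K / 2 := by
    field_simp [hθdef]
    rw [hθdef, div_mul_eq_mul_div, div_mul_eq_mul_div, div_eq_iff (mul_pos two_pos hc₁pos).ne']
    ring
  have h3 : K / 2 * s ^ 2 ≤ θ * (F s + c₂) := by
    have : θ * (c₁ * s ^ 2) ≤ θ * (F s + c₂) := by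
      apply mul_le_mul_of_nonneg_left h2 hθ0
    nlinarith [this]
  have h4 : F' s * s ≤ |F' s| * (1 + |s|) := by
    calc F' s * s ≤ |F' s * s| := le_abs_self _
    _ = |F' s| * |s| := abs_mul _ _
    _ ≤ |F' s| * (1 + |s|) := by nlinarith [abs_nonneg s]
  have h5 : d * F s ≤ |F 0| + |F' s| * (1 + |s|) + θ * c₂ := by
    have hk := key s
    have := le_abs_self (F 0)
    simp only [hddef]
    nlinarith
  have hFlb : -c₂ ≤ F s := by nlinarith [hF_low s, sq_nonneg s]
  have habs : |F s| ≤ F s + 2 * c₂ := by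
    rw [abs_le]
    constructor <;> linarith
  have h6 : F s ≤ (|F 0| + |F' s| * (1 + |s|) + θ * c₂) / d := by
    rw [le_div_iff₀ hd]
    linarith [h5]
  have h7 : (|F 0| + |F' s| * (1 + |s|) + θ * c₂) / d
      = 1 / d * |F' s| * (1 + |s|) + (|F 0| + θ * c₂) / d := by
    field_simp
    ring
  rw [h7] at h6
  linarith
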